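/- Let G be a nilpotent group and φ : G → G a group endomorphism. Suppose that for every i ≥ 1 the endomorphism that φ induces on the abelian quotient γ_i(G)/γ_{i+1}(G) of the lower central series has the property that the map x ↦ φ̄(x)·x⁻¹ on γ_i(G)/γ_{i+1}(G) is bijective. Then the map G → G given by x ↦ φ(x⁻¹)·x is a bijection. -/

import Mathlib

private lemma aux_central {H : Type*} [Group H] (a y s w : H)
    (ha : ∀ v : H, Commute a v) (hy : ∀ v : H, Commute y v) :
    y⁻¹ * s⁻¹ * (a * y) * s * w = a * w := by
  have h1 : s⁻¹ * (a * y) * s = a * y := by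
    have hc : Commute (a * y) s := (ha s).mul_left (hy s)
    calc s⁻¹ * (a * y) * s = s⁻¹ * ((a * y) * s) := by group
    _ = s⁻¹ * (s * (a * y)) := by rw [hc.eq]
    _ = a * y := by group
  calc y⁻¹ * s⁻¹ * (a * y) * s * w = y⁻¹ * (s⁻¹ * (a * y) * s) * w := by group
  _ = y⁻¹ * (a * y) * w := by rw [h1]
  _ = y⁻¹ * (y * a) * w := by rw [(ha y).eq]
  _ = a * w := by group

private lemma aux_comm {G : Type*} [Group G] {i : ℕ} {u : G}
    (hu : u ∈ (⊤ : Subgroup G).lowerCentralSeries i) (v : G) :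
    u * v * u⁻¹ * v⁻¹ ∈ (⊤ : Subgroup G).lowerCentralSeries (i + 1) :=
  Subgroup.commutator_mem_commutator hu (Subgroup.mem_top v)

/-- If `G` is a nilpotent group and `φ : G → G` an endomorphism such that, for every `i`,
the map `x ↦ φ̄(x)·x⁻¹` induced on the abelian quotient `γ_i(G)/γ_{i+1}(G)` of the lower
central series is bijective, then `x ↦ φ(x⁻¹)·x` is a bijection on `G`.
(Here bijectivity of the induced map is expressed concretely modulo `γ_{i+1}(G)`.) -/
theorem stmt0 {G : Type*} [Group G] [Group.IsNilpotent G] (φ : G →* G)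
    (hsurj : ∀ i : ℕ, ∀ x ∈ (⊤ : Subgroup G).lowerCentralSeries i,
      ∃ y ∈ (⊤ : Subgroup G).lowerCentralSeries i, φ y * y⁻¹ * x⁻¹ ∈ (⊤ : Subgroup G).lowerCentralSeries (i + 1))
    (hinj : ∀ i : ℕ, ∀ x ∈ (⊤ : Subgroup G).lowerCentralSeries i, ∀ y ∈ (⊤ : Subgroup G).lowerCentralSeries i,
      (φ x * x⁻¹) * (φ y * y⁻¹)⁻¹ ∈ (⊤ : Subgroup G).lowerCentralSeries (i + 1) →
        x * y⁻¹ ∈ (⊤ : Subgroup G).lowerCentralSeries (i + 1)) :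
    Function.Bijective (fun x : G => φ x⁻¹ * x) := by
  obtain ⟨n, hn⟩ := Subgroup.nilpotent_iff_lowerCentralSeries.mp ‹Group.IsNilpotent G›
  constructor
  · -- injectivity
    intro x y hxy
    simp only at hxy
    have key : ∀ i, x * y⁻¹ ∈ (⊤ : Subgroup G).lowerCentralSeries i := by
      intro i
      induction i with
      | zero => exact Subgroup.mem_top _
      | succ i ih =>
        have hx2 : (φ x)⁻¹ * x = (φ y)⁻¹ * y := by simpa [map_inv] using hxy
        have h1 : φ (x * y⁻¹) * (x * y⁻¹)⁻¹ * (φ 1 * (1 : G)⁻¹)⁻¹ = 1 := by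
          have step : φ (x * y⁻¹) * (x * y⁻¹)⁻¹ * (φ 1 * (1 : G)⁻¹)⁻¹
              = φ x * ((φ y)⁻¹ * y) * x⁻¹ := by
            rw [map_mul, map_inv, map_one]; group
          rw [step, ← hx2]; group
        have := hinj i (x * y⁻¹) ih 1 (one_mem _) (by rw [h1]; exact one_mem _)
        simpa using this
      -- done
    have : x * y⁻¹ ∈ (⊥ : Subgroup G) := hn ▸ key n
    rw [Subgroup.mem_bot] at this
    have := mul_inv_eq_one.mp this
    exact this
  · -- surjectivity
    intro g
    have key : ∀ i : ℕ, ∃ x : G, (φ x⁻¹ * x)⁻¹ * g ∈ (⊤ : Subgroup G).lowerCentralSeries i := by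
      intro i
      induction i with
      | zero => exact ⟨1, Subgroup.mem_top _⟩
      | succ i ih =>
        obtain ⟨x, hx⟩ := ih
        set s : G := φ x⁻¹ * x with hs
        set w : G := s⁻¹ * g with hw
        obtain ⟨y, hy, hyw⟩ := hsurj i w⁻¹ (inv_mem hx)
        rw [inv_inv] at hyw
        refine ⟨x * y, ?_⟩
        set N : Subgroup G := (⊤ : Subgroup G).lowerCentralSeries (i + 1) with hN
        set a : G := φ y * y⁻¹ with ha
        have haw : a * w ∈ N := hyw
        have haγ : a ∈ (⊤ : Subgroup G).lowerCentralSeries i := by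
          have : a = (a * w) * w⁻¹ := by group
          rw [this]
          exact mul_mem (Subgroup.lowerCentralSeries_antitone _ (Nat.le_succ i) haw) (inv_mem hx)
        -- target element
        have hE : (φ (x * y)⁻¹ * (x * y))⁻¹ * g = y⁻¹ * s⁻¹ * (a * y) * s * w := by
          simp only [hs, hw, ha, map_mul, map_inv, mul_inv_rev]
          group
        rw [hE]
        -- pass to quotient by N
        rw [← QuotientGroup.eq_one_iff (N := N)]
        have hcomm : ∀ u : G, u ∈ (⊤ : Subgroup G).lowerCentralSeries i →
            ∀ v : G, Commute ((u : G ⧸ N)) ((v : G ⧸ N)) := by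
          intro u hu v
          rw [← commutatorElement_eq_one_iff_commute]
          open scoped commutatorElement in
          have : ((⁅u, v⁆ : G) : G ⧸ N) = ⁅(u : G ⧸ N), (v : G ⧸ N)⁆ := by
            simp [commutatorElement_def]
          rw [← this, QuotientGroup.eq_one_iff]
          exact aux_comm hu v
        have hca : ∀ v : G ⧸ N, Commute ((a : G ⧸ N)) v := by
          intro v
          obtain ⟨v, rfl⟩ := QuotientGroup.mk_surjective v
          exact hcomm a haγ v
        have hcy : ∀ v : G ⧸ N, Commute ((y : G ⧸ N)) v := by
          intro v
          obtain ⟨v, rfl⟩ := QuotientGroup.mk_surjective v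
          exact hcomm y hy v
        have : ((y⁻¹ * s⁻¹ * (a * y) * s * w : G) : G ⧸ N)
            = (y : G ⧸ N)⁻¹ * (s : G ⧸ N)⁻¹ * ((a : G ⧸ N) * (y : G ⧸ N))
              * (s : G ⧸ N) * (w : G ⧸ N) := by
          simp
        rw [this, aux_central _ _ _ _ hca hcy]
        have : ((a : G ⧸ N) * (w : G ⧸ N)) = ((a * w : G) : G ⧸ N) := by simp
        rw [this, QuotientGroup.eq_one_iff]
        exact haw
    obtain ⟨x, hx⟩ := key n
    rw [hn, Subgroup.mem_bot] at hx
    exact ⟨x, inv_mul_eq_one.mp hx⟩
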